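/- Let (V, [,]) be a Leibniz algebra over k ([v,[w,u]] = [[v,w],u] − [[v,u],w]). The Loday differential d(v₁⋯vₙ) = Σ_{1 ≤ i < j ≤ n} (−1)^{j−1} v₁⋯v_{i−1}[vᵢ,vⱼ]v_{i+1}⋯v̂ⱼ⋯vₙ (where v̂ⱼ means vⱼ is omitted) satisfies d ∘ d = 0 on the tensor powers V^⊗n. -/

import Mathlib

open TensorProduct

universe u
variable {R V : Type u} [CommRing R] [AddCommGroup V] [Module R V]

variable (R V) in
/-- The iterated tensor power `V^{⊗n}` (left-nested: `TP 0 = R`, `TP (n+1) = V ⊗ TP n`),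
bundled as an object of `ModuleCat R` so that the recursion carries its instances. -/
noncomputable def TPb : ℕ → ModuleCat.{u} R
  | 0 => ModuleCat.of R R
  | n + 1 => ModuleCat.of R (V ⊗[R] (TPb n))

variable (R V) in
/-- The iterated tensor power `V^{⊗n}` as a type. -/
noncomputable abbrev TP (n : ℕ) : Type u := (TPb R V n : Type u)

/-- `ε₁ = ε ⊗ id^{⊗n}` : applying `ε` to the first tensor factor of `V^{⊗(n+1)}`. -/
noncomputable def eps1 (ε : V →ₗ[R] R) (n : ℕ) : TP R V (n+1) →ₗ[R] TP R V n :=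
  (TensorProduct.lid R (TP R V n)).toLinearMap ∘ₗ LinearMap.rTensor (TP R V n) ε

/-- The multiplication `μ` applied to the factors `i, i+1` of `V^{⊗(n+1)}` (1-indexed,
`1 ≤ i ≤ n`; junk value `0` out of range). -/
noncomputable def mui (μL : V ⊗[R] V →ₗ[R] V) :
    (n : ℕ) → (i : ℕ) → TP R V (n+1) →ₗ[R] TP R V n
  | 0, _ => 0
  | _+1, 0 => 0
  | n+1, 1 => (LinearMap.rTensor (TP R V n) μL) ∘ₗ
      (TensorProduct.assoc R V V (TP R V n)).symm.toLinearMap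
  | n+1, i+2 => LinearMap.lTensor V (mui μL n (i+1))

/-- Right concatenation with the element `one`: `v₁⋯vₙ ↦ v₁⋯vₙ ⊗ 1`. -/
noncomputable def appendOne (one : V) : (n : ℕ) → TP R V n →ₗ[R] TP R V (n+1)
  | 0 => TensorProduct.mk R V R one
  | n+1 => LinearMap.lTensor V (appendOne one n)

/-- `ζ` applied to the last tensor factor of `V^{⊗(n+1)}`. -/
noncomputable def epsLast (ζ : V →ₗ[R] R) : (n : ℕ) → TP R V (n+1) →ₗ[R] TP R V n
  | 0 => ζ ∘ₗ (TensorProduct.rid R V).toLinearMap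
  | n+1 => LinearMap.lTensor V (epsLast ζ n)

/-- The flip of the first two tensor factors of `V^{⊗(n+2)}`. -/
noncomputable def flip12 (n : ℕ) : TP R V (n+2) →ₗ[R] TP R V (n+2) :=
  (TensorProduct.assoc R V V (TP R V n)).toLinearMap ∘ₗ
    (LinearMap.rTensor (TP R V n) (TensorProduct.comm R V V).toLinearMap) ∘ₗ
    (TensorProduct.assoc R V V (TP R V n)).symm.toLinearMap

/-- `id_V ⊗ f` viewed as a map of iterated tensor powers. -/
noncomputable def lT {m m' : ℕ} (f : TP R V m →ₗ[R] TP R V m') :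
    TP R V (m+1) →ₗ[R] TP R V (m'+1) :=
  LinearMap.lTensor V f

/-- The bracket applied to the factors `1, 2` of `V^{⊗(n+2)}` :
`v₁ ⊗ v₂ ⊗ y ↦ [v₁,v₂] ⊗ y`. -/
noncomputable def brHead (bL : V ⊗[R] V →ₗ[R] V) (n : ℕ) :
    TP R V (n+2) →ₗ[R] TP R V (n+1) :=
  (LinearMap.rTensor (TP R V n) bL) ∘ₗ
    (TensorProduct.assoc R V V (TP R V n)).symm.toLinearMap

/-- The `i = 1` part of the Loday differential on `V^{⊗(n+1)}`:
`K(v₁⋯v_{n+1}) = Σ_{j=2}^{n+1} (−1)^{j−1} [v₁,vⱼ] v₂ ⋯ v̂ⱼ ⋯ v_{n+1}`. -/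
noncomputable def KLei (bL : V ⊗[R] V →ₗ[R] V) : (n : ℕ) → TP R V (n+1) →ₗ[R] TP R V n
  | 0 => 0
  | 1 => - brHead bL 0
  | n+2 => - brHead bL (n+1) - flip12 n ∘ₗ lT (KLei bL (n+1)) ∘ₗ flip12 (n+1)

/-- The Loday differential
`d(v₁⋯vₙ) = Σ_{i<j} (−1)^{j−1} v₁⋯v_{i−1}[vᵢ,vⱼ]v_{i+1}⋯v̂ⱼ⋯vₙ` on `V^{⊗(n+1)}`. -/
noncomputable def dLei (bL : V ⊗[R] V →ₗ[R] V) : (n : ℕ) → TP R V (n+1) →ₗ[R] TP R V n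
  | 0 => 0
  | n+1 => KLei bL (n+1) - lT (dLei bL n)

section AuxLemmas

/-- Insert `v` in front: `x ↦ v ⊗ x`. -/
noncomputable def mkT (n : ℕ) (v : V) : TP R V n →ₗ[R] TP R V (n+1) :=
  TensorProduct.mk R V (TP R V n) v

@[simp] lemma mkT_apply (n : ℕ) (v : V) (x : TP R V n) :
    mkT n v x = v ⊗ₜ[R] x := rfl

lemma mkT_sub_left (n : ℕ) (a b : V) (x : TP R V n) :
    mkT n (a - b) x = mkT n a x - mkT n b x := sub_tmul _ _ _

lemma TP_ext1 {n : ℕ} {M : Type u} [AddCommGroup M] [Module R M]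
    {f g : TP R V (n+1) →ₗ[R] M}
    (h : ∀ (v : V) (x : TP R V n), f (mkT _ v x) = g (mkT _ v x)) : f = g :=
  TensorProduct.ext' h

@[simp] lemma flip12_tmul (n : ℕ) (v u : V) (x : TP R V n) :
    flip12 n (mkT _ v (mkT _ u x)) = mkT _ u (mkT _ v x) := by
  rfl

@[simp] lemma brHead_tmul (bL : V ⊗[R] V →ₗ[R] V) (n : ℕ) (v u : V) (x : TP R V n) :
    brHead bL n (mkT _ v (mkT _ u x)) = mkT _ (bL (v ⊗ₜ[R] u)) x := by
  rfl

/-- Insert `u` at the second position. -/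
noncomputable def Psi : (n : ℕ) → V → (TP R V n →ₗ[R] TP R V (n+1))
  | 0, _ => 0
  | n+1, u => flip12 n ∘ₗ mkT (n+1) u

@[simp] lemma Psi_zero (u : V) : Psi 0 u = (0 : TP R V 0 →ₗ[R] TP R V 1) := rfl

@[simp] lemma Psi_tmul (n : ℕ) (u s : V) (y : TP R V n) :
    Psi (n+1) u (mkT _ s y) = mkT _ s (mkT _ u y) := by
  rfl

/-- Symmetrized insertion at positions 1 and 2. -/
noncomputable def Sig (n : ℕ) (u : V) : TP R V n →ₗ[R] TP R V (n+1) :=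
  Psi n u + mkT n u

end AuxLemmas
section AuxLemmas2

variable (bL : V ⊗[R] V →ₗ[R] V)

/-- `Kc n v = KLei n ∘ (v ⊗ ·)` : the `i = 1` Loday part with first entry `v`. -/
noncomputable def Kc (n : ℕ) (v : V) : TP R V n →ₗ[R] TP R V n :=
  KLei bL n ∘ₗ mkT n v

lemma Kc_apply (n : ℕ) (v : V) (x : TP R V n) :
    Kc bL n v x = KLei bL n (mkT _ v x) := rfl

@[simp] lemma Kc_zero (v : V) : Kc bL 0 v = 0 := by
  have : KLei bL 0 = 0 := rfl
  simp [Kc, this]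

/-- Left bracketing in the head slot. -/
noncomputable def HLl (n : ℕ) (v : V) : TP R V (n+1) →ₗ[R] TP R V (n+1) :=
  LinearMap.rTensor (TP R V n) (bL ∘ₗ TensorProduct.mk R V V v)

/-- Right bracketing in the head slot. -/
noncomputable def HRr (n : ℕ) (w : V) : TP R V (n+1) →ₗ[R] TP R V (n+1) :=
  LinearMap.rTensor (TP R V n) (bL ∘ₗ (TensorProduct.mk R V V).flip w)

@[simp] lemma HLl_tmul (n : ℕ) (v u : V) (x : TP R V n) :
    HLl bL n v (mkT _ u x) = mkT n (bL (v ⊗ₜ[R] u)) x := rfl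

@[simp] lemma HRr_tmul (n : ℕ) (w u : V) (x : TP R V n) :
    HRr bL n w (mkT _ u x) = mkT n (bL (u ⊗ₜ[R] w)) x := rfl

@[simp] lemma lT_tmul {m m' : ℕ} (f : TP R V m →ₗ[R] TP R V m') (v : V) (x : TP R V m) :
    lT f (mkT _ v x) = mkT m' v (f x) := rfl

/-- The operator `Θ`. -/
noncomputable def Th (n : ℕ) (w : V) : TP R V (n+1) →ₗ[R] TP R V (n+1) :=
  -HRr bL n w - lT (Kc bL n w)

lemma Th_tmul (n : ℕ) (w u : V) (x : TP R V n) :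
    Th bL n w (mkT _ u x)
      = -(mkT n (bL (u ⊗ₜ[R] w)) x) - mkT n u (Kc bL n w x) := by
  rfl

/-- Pointwise recursion for `KLei`. -/
lemma KLei_tmul (n : ℕ) (v u : V) (x : TP R V n) :
    KLei bL (n+1) (mkT _ v (mkT _ u x))
      = -(mkT n (bL (v ⊗ₜ[R] u)) x) - Psi n u (Kc bL n v x) := by
  cases n with
  | zero =>
      show (- brHead bL 0) (mkT _ v (mkT _ u x)) = _
      rfl
  | succ m =>
      show (- brHead bL (m+1) - flip12 m ∘ₗ lT (KLei bL (m+1)) ∘ₗ flip12 (m+1))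
        (mkT _ v (mkT _ u x)) = _
      have hpsi : Psi (m+1) u (Kc bL (m+1) v x)
          = flip12 m (mkT _ u (KLei bL (m+1) (mkT _ v x))) := rfl
      simp [hpsi]
      rfl

lemma Kc_tmul (n : ℕ) (v u : V) (x : TP R V n) :
    Kc bL (n+1) v (mkT _ u x)
      = -(mkT n (bL (v ⊗ₜ[R] u)) x) - Psi n u (Kc bL n v x) :=
  KLei_tmul bL n v u x

lemma dLei_succ_tmul (n : ℕ) (v : V) (x : TP R V (n+1)) :
    dLei bL (n+1) (mkT _ v x) = Kc bL (n+1) v x - mkT n v (dLei bL n x) := by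
  show (KLei bL (n+1) - lT (dLei bL n)) (mkT _ v x) = _
  rfl

end AuxLemmas2
section AuxLemmas3

variable (bL : V ⊗[R] V →ₗ[R] V)

/-- O_a : interaction of symmetric insertion with `Psi`. -/
lemma Sig_psi (t : ℕ) (u s : V) :
    lT (Sig t u) ∘ₗ Psi t s
      = (Psi (t+1) s ∘ₗ Psi t u + Psi (t+1) u ∘ₗ Psi t s :
          TP R V t →ₗ[R] TP R V (t+2)) := by
  cases t with
  | zero => simp [Psi]
  | succ r =>
      apply TP_ext1
      intro a y
      simp only [LinearMap.comp_apply, LinearMap.add_apply]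
      rw [show Psi (r+1) s (mkT _ a y) = mkT _ a (mkT _ s y) from rfl,
          show Psi (r+1) u (mkT _ a y) = mkT _ a (mkT _ u y) from rfl,
          show Psi (r+2) s (mkT _ a (mkT _ u y)) = mkT _ a (mkT _ s (mkT _ u y)) from rfl,
          show Psi (r+2) u (mkT _ a (mkT _ s y)) = mkT _ a (mkT _ u (mkT _ s y)) from rfl,
          show lT (Sig (r+1) u) (mkT _ a (mkT _ s y))
              = mkT _ a (Sig (r+1) u (mkT _ s y)) from rfl,
          show Sig (r+1) u (mkT _ s y)
              = mkT _ s (mkT _ u y) + mkT _ u (mkT _ s y) from rfl]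
      exact tmul_add a _ _

/-- head-slot operators commute with `Psi`. -/
lemma HRr_psi (n : ℕ) (w u : V) :
    HRr bL (n+1) w ∘ₗ Psi (n+1) u = Psi (n+1) u ∘ₗ HRr bL n w := by
  apply TP_ext1
  intro s y
  rw [show (HRr bL (n+1) w ∘ₗ Psi (n+1) u) (mkT _ s y)
        = mkT _ (bL (s ⊗ₜ[R] w)) (mkT _ u y) from rfl,
      show (Psi (n+1) u ∘ₗ HRr bL n w) (mkT _ s y)
        = mkT _ (bL (s ⊗ₜ[R] w)) (mkT _ u y) from rfl]

lemma HLl_psi (n : ℕ) (v u : V) :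
    HLl bL (n+1) v ∘ₗ Psi (n+1) u = Psi (n+1) u ∘ₗ HLl bL n v := by
  apply TP_ext1
  intro s y
  rw [show (HLl bL (n+1) v ∘ₗ Psi (n+1) u) (mkT _ s y)
        = mkT _ (bL (v ⊗ₜ[R] s)) (mkT _ u y) from rfl,
      show (Psi (n+1) u ∘ₗ HLl bL n v) (mkT _ s y)
        = mkT _ (bL (v ⊗ₜ[R] s)) (mkT _ u y) from rfl]

/-- O_E : `d ∘ Psi w = Θ w - Psi w ∘ d`. -/
lemma dPsi (n : ℕ) (w : V) :
    dLei bL (n+1) ∘ₗ Psi (n+1) w = Th bL n w - Psi n w ∘ₗ dLei bL n := by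
  have hd0 : dLei bL 0 = 0 := rfl
  cases n with
  | zero =>
      apply TP_ext1
      intro u y
      simp only [LinearMap.comp_apply, LinearMap.sub_apply,
        show Psi 1 w (mkT _ u y) = mkT _ u (mkT _ w y) from rfl]
      rw [dLei_succ_tmul, Kc_tmul, Th_tmul]
      simp [hd0, -mkT_apply]
  | succ m =>
      apply TP_ext1
      intro u y
      simp only [LinearMap.comp_apply, LinearMap.sub_apply,
        show Psi (m+2) w (mkT _ u y) = mkT _ u (mkT _ w y) from rfl]
      rw [dLei_succ_tmul, Kc_tmul, Th_tmul, dLei_succ_tmul, dLei_succ_tmul]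
      simp only [map_sub, map_neg]
      rw [show Psi (m+1) w (mkT m u (dLei bL m y))
            = mkT (m+1) u (mkT m w (dLei bL m y)) from rfl]
      abel

end AuxLemmas3
section AuxLemmas4

variable (bL : V ⊗[R] V →ₗ[R] V)

lemma Sig_apply (n : ℕ) (u : V) (z : TP R V n) :
    Sig n u z = Psi n u z + mkT n u z := rfl

/-- O_L1 : commuting `Kc` past an insertion at position 2. -/
lemma Kc_psi (t : ℕ) (v u : V) :
    Kc bL (t+2) v ∘ₗ Psi (t+1) u
      = (Psi (t+1) u ∘ₗ Kc bL (t+1) v + mkT (t+1) (bL (v ⊗ₜ[R] u))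
          - lT (Sig t u) ∘ₗ (Kc bL (t+1) v + HLl bL t v) :
          TP R V (t+1) →ₗ[R] TP R V (t+2)) := by
  apply TP_ext1
  intro s y
  have ha := LinearMap.congr_fun (Sig_psi t u s) (Kc bL t v y)
  simp only [LinearMap.comp_apply, LinearMap.add_apply] at ha
  simp only [LinearMap.comp_apply, LinearMap.add_apply, LinearMap.sub_apply]
  rw [show Psi (t+1) u (mkT _ s y) = mkT _ s (mkT _ u y) from rfl]
  rw [Kc_tmul bL (t+1) v s, Kc_tmul bL t v u, Kc_tmul bL t v s, HLl_tmul]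
  simp only [map_add, map_neg, map_sub]
  rw [ha]
  rw [show Psi (t+1) s (mkT t (bL (v ⊗ₜ[R] u)) y)
        = mkT (t+1) (bL (v ⊗ₜ[R] u)) (mkT _ s y) from rfl,
      show Psi (t+1) u (mkT t (bL (v ⊗ₜ[R] s)) y)
        = mkT (t+1) (bL (v ⊗ₜ[R] s)) (mkT _ u y) from rfl]
  abel

/-- O_L2 : commuting `Θ` past an insertion at position 2. -/
lemma Th_psi (t : ℕ) (w u : V) :
    Th bL (t+1) w ∘ₗ Psi (t+1) u
      = (Psi (t+1) u ∘ₗ Th bL t w + Psi (t+1) (bL (w ⊗ₜ[R] u))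
          - lT (Sig t u) ∘ₗ (Th bL t w + HRr bL t w) :
          TP R V (t+1) →ₗ[R] TP R V (t+2)) := by
  apply TP_ext1
  intro s y
  simp only [LinearMap.comp_apply, LinearMap.add_apply, LinearMap.sub_apply]
  rw [show Psi (t+1) u (mkT _ s y) = mkT _ s (mkT _ u y) from rfl]
  rw [Th_tmul bL (t+1) w s, Kc_tmul bL t w u, Th_tmul bL t w s, HRr_tmul]
  simp only [map_add, map_neg, map_sub]
  rw [show Psi (t+1) u (mkT t (bL (s ⊗ₜ[R] w)) y)
        = mkT (t+1) (bL (s ⊗ₜ[R] w)) (mkT _ u y) from rfl,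
      show Psi (t+1) u (mkT t s (Kc bL t w y))
        = mkT (t+1) s (mkT t u (Kc bL t w y)) from rfl,
      show Psi (t+1) (bL (w ⊗ₜ[R] u)) (mkT _ s y)
        = mkT (t+1) s (mkT t (bL (w ⊗ₜ[R] u)) y) from rfl,
      show lT (Sig t u) (mkT t s (Kc bL t w y))
        = mkT (t+1) s (Sig t u (Kc bL t w y)) from rfl,
      Sig_apply t u (Kc bL t w y)]
  simp only [map_add]
  abel

end AuxLemmas4
section AuxLemmas5

variable (bL : V ⊗[R] V →ₗ[R] V)

/-- O_§ : head-bracketing against `Kc` realizes the Leibniz identity. -/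
lemma HK
    (hb : ∀ v w u : V, bL (v ⊗ₜ[R] bL (w ⊗ₜ[R] u))
        = bL (bL (v ⊗ₜ[R] w) ⊗ₜ[R] u) - bL (bL (v ⊗ₜ[R] u) ⊗ₜ[R] w))
    (n : ℕ) (v w : V) :
    HRr bL n w ∘ₗ Kc bL (n+1) v + HLl bL n v ∘ₗ Kc bL (n+1) w
      = Kc bL (n+1) (bL (v ⊗ₜ[R] w)) := by
  induction n with
  | zero =>
      apply TP_ext1
      intro u y
      simp only [LinearMap.comp_apply, LinearMap.add_apply]
      rw [Kc_tmul bL 0 v u, Kc_tmul bL 0 w u, Kc_tmul bL 0 (bL (v ⊗ₜ[R] w)) u]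
      simp only [Kc_zero, LinearMap.zero_apply, map_zero, sub_zero, map_neg,
        Psi_zero]
      rw [show HRr bL 0 w (mkT _ (bL (v ⊗ₜ[R] u)) y)
            = mkT _ (bL (bL (v ⊗ₜ[R] u) ⊗ₜ[R] w)) y from rfl,
          show HLl bL 0 v (mkT _ (bL (w ⊗ₜ[R] u)) y)
            = mkT _ (bL (v ⊗ₜ[R] bL (w ⊗ₜ[R] u))) y from rfl,
          hb v w u, mkT_sub_left]
      abel
  | succ t ih =>
      apply TP_ext1
      intro u x
      have hx := LinearMap.congr_fun ih x
      simp only [LinearMap.comp_apply, LinearMap.add_apply] at hx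
      have hpu := congrArg (Psi (t+1) u) hx
      rw [map_add] at hpu
      have h1 := LinearMap.congr_fun (HRr_psi bL t w u) (Kc bL (t+1) v x)
      have h2 := LinearMap.congr_fun (HLl_psi bL t v u) (Kc bL (t+1) w x)
      simp only [LinearMap.comp_apply] at h1 h2
      simp only [LinearMap.comp_apply, LinearMap.add_apply]
      rw [Kc_tmul bL (t+1) v u, Kc_tmul bL (t+1) w u,
          Kc_tmul bL (t+1) (bL (v ⊗ₜ[R] w)) u]
      simp only [map_neg, map_sub]
      rw [h1, h2,
          show HRr bL (t+1) w (mkT (t+1) (bL (v ⊗ₜ[R] u)) x)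
            = mkT (t+1) (bL (bL (v ⊗ₜ[R] u) ⊗ₜ[R] w)) x from rfl,
          show HLl bL (t+1) v (mkT (t+1) (bL (w ⊗ₜ[R] u)) x)
            = mkT (t+1) (bL (v ⊗ₜ[R] bL (w ⊗ₜ[R] u))) x from rfl,
          hb v w u,
          show mkT (t+1) (bL (bL (v ⊗ₜ[R] w) ⊗ₜ[R] u) - bL (bL (v ⊗ₜ[R] u) ⊗ₜ[R] w)) x
            = mkT (t+1) (bL (bL (v ⊗ₜ[R] w) ⊗ₜ[R] u)) x
              - mkT (t+1) (bL (bL (v ⊗ₜ[R] u) ⊗ₜ[R] w)) x from sub_tmul _ _ _,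
          ← hpu]
      abel

/-- O_‡ : the key Leibniz-algebra identity for `Θ` and `Kc`. -/
lemma ThKc
    (hb : ∀ v w u : V, bL (v ⊗ₜ[R] bL (w ⊗ₜ[R] u))
        = bL (bL (v ⊗ₜ[R] w) ⊗ₜ[R] u) - bL (bL (v ⊗ₜ[R] u) ⊗ₜ[R] w))
    (n : ℕ) (v w : V) :
    Th bL n w ∘ₗ Kc bL (n+1) v + Kc bL (n+1) v ∘ₗ Kc bL (n+1) w
      + Kc bL (n+1) (bL (v ⊗ₜ[R] w)) = 0 := by
  induction n with
  | zero =>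
      apply TP_ext1
      intro u y
      simp only [LinearMap.comp_apply, LinearMap.add_apply, LinearMap.zero_apply]
      rw [Kc_tmul bL 0 v u, Kc_tmul bL 0 w u, Kc_tmul bL 0 (bL (v ⊗ₜ[R] w)) u]
      simp only [Kc_zero, LinearMap.zero_apply, map_zero, sub_zero, map_neg,
        Psi_zero]
      rw [show Th bL 0 w (mkT _ (bL (v ⊗ₜ[R] u)) y)
            = -(mkT _ (bL (bL (v ⊗ₜ[R] u) ⊗ₜ[R] w)) y)
              - mkT _ (bL (v ⊗ₜ[R] u)) (Kc bL 0 w y) from Th_tmul bL 0 w _ y,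
          Kc_tmul bL 0 v (bL (w ⊗ₜ[R] u)) y,
          hb v w u,
          show mkT 0 (bL (bL (v ⊗ₜ[R] w) ⊗ₜ[R] u) - bL (bL (v ⊗ₜ[R] u) ⊗ₜ[R] w)) y
            = mkT 0 (bL (bL (v ⊗ₜ[R] w) ⊗ₜ[R] u)) y
              - mkT 0 (bL (bL (v ⊗ₜ[R] u) ⊗ₜ[R] w)) y from sub_tmul _ _ _]
      simp only [Kc_zero, LinearMap.zero_apply, map_zero, sub_zero, tmul_zero,
        Psi_zero]
      abel
  | succ t ih =>
      apply TP_ext1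
      intro u x
      have hx := LinearMap.congr_fun ih x
      simp only [LinearMap.comp_apply, LinearMap.add_apply, LinearMap.zero_apply] at hx
      have hpu := congrArg (Psi (t+1) u) hx
      simp only [map_add, map_zero] at hpu
      have hkx := LinearMap.congr_fun (HK bL hb t v w) x
      simp only [LinearMap.comp_apply, LinearMap.add_apply] at hkx
      have hL1 := LinearMap.congr_fun (Kc_psi bL t v u) (Kc bL (t+1) w x)
      have hL2 := LinearMap.congr_fun (Th_psi bL t w u) (Kc bL (t+1) v x)
      simp only [LinearMap.comp_apply, LinearMap.add_apply, LinearMap.sub_apply] at hL1 hL2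
      have hS := congrArg (lT (Sig t u)) hx
      simp only [map_add, map_zero] at hS
      have hSB := eq_neg_of_add_eq_zero_right hS
      have hsig1 := congrArg (lT (Sig t u)) hkx
      simp only [map_add] at hsig1
      have h5 := eq_sub_of_add_eq (hsig1.trans hSB)
      have hBp := eq_neg_of_add_eq_zero_right hpu
      simp only [LinearMap.comp_apply, LinearMap.add_apply, LinearMap.zero_apply]
      rw [Kc_tmul bL (t+1) v u, Kc_tmul bL (t+1) w u,
          Kc_tmul bL (t+1) (bL (v ⊗ₜ[R] w)) u]
      simp only [map_neg, map_sub]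
      rw [hL1, hL2,
          show Th bL (t+1) w (mkT (t+1) (bL (v ⊗ₜ[R] u)) x)
            = -(mkT (t+1) (bL (bL (v ⊗ₜ[R] u) ⊗ₜ[R] w)) x)
              - mkT (t+1) (bL (v ⊗ₜ[R] u)) (Kc bL (t+1) w x) from Th_tmul bL (t+1) w _ x,
          show Kc bL (t+2) v (mkT (t+1) (bL (w ⊗ₜ[R] u)) x)
            = -(mkT (t+1) (bL (v ⊗ₜ[R] bL (w ⊗ₜ[R] u))) x)
              - Psi (t+1) (bL (w ⊗ₜ[R] u)) (Kc bL (t+1) v x)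
            from Kc_tmul bL (t+1) v _ x,
          hb v w u,
          show mkT (t+1) (bL (bL (v ⊗ₜ[R] w) ⊗ₜ[R] u) - bL (bL (v ⊗ₜ[R] u) ⊗ₜ[R] w)) x
            = mkT (t+1) (bL (bL (v ⊗ₜ[R] w) ⊗ₜ[R] u)) x
              - mkT (t+1) (bL (bL (v ⊗ₜ[R] u) ⊗ₜ[R] w)) x from sub_tmul _ _ _]
      simp only [map_add, map_neg, map_sub]
      rw [hBp, h5]
      abel

end AuxLemmas5
section AuxLemmas6

variable (bL : V ⊗[R] V →ₗ[R] V)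

/-- O_∗ : the Loday differential intertwines the `Kc` operators. -/
lemma dKc
    (hb : ∀ v w u : V, bL (v ⊗ₜ[R] bL (w ⊗ₜ[R] u))
        = bL (bL (v ⊗ₜ[R] w) ⊗ₜ[R] u) - bL (bL (v ⊗ₜ[R] u) ⊗ₜ[R] w))
    (n : ℕ) (v : V) :
    dLei bL n ∘ₗ Kc bL (n+1) v = Kc bL n v ∘ₗ dLei bL n := by
  induction n with
  | zero =>
      rw [show dLei bL 0 = 0 from rfl]
      rw [LinearMap.zero_comp, LinearMap.comp_zero]
  | succ m ih =>
      apply TP_ext1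
      intro u x
      have hIH := LinearMap.congr_fun ih x
      simp only [LinearMap.comp_apply] at hIH
      have hE := LinearMap.congr_fun (dPsi bL m u) (Kc bL (m+1) v x)
      simp only [LinearMap.comp_apply, LinearMap.sub_apply] at hE
      have hT := LinearMap.congr_fun (ThKc bL hb m v u) x
      simp only [LinearMap.comp_apply, LinearMap.add_apply, LinearMap.zero_apply] at hT
      simp only [LinearMap.comp_apply]
      rw [Kc_tmul bL (m+1) v u]
      simp only [map_sub, map_neg]
      rw [hE, hIH,
          show dLei bL (m+1) (mkT (m+1) (bL (v ⊗ₜ[R] u)) x)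
            = Kc bL (m+1) (bL (v ⊗ₜ[R] u)) x - mkT m (bL (v ⊗ₜ[R] u)) (dLei bL m x)
            from dLei_succ_tmul bL m _ x,
          dLei_succ_tmul bL m u x]
      simp only [map_sub]
      rw [show Kc bL (m+1) v (mkT m u (dLei bL m x))
            = -(mkT m (bL (v ⊗ₜ[R] u)) (dLei bL m x))
              - Psi m u (Kc bL m v (dLei bL m x)) from Kc_tmul bL m v u _]
      rw [show Kc bL (m+1) (bL (v ⊗ₜ[R] u)) x
            = -(Th bL m u (Kc bL (m+1) v x) + Kc bL (m+1) v (Kc bL (m+1) u x))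
            from eq_neg_of_add_eq_zero_right hT]
      abel

end AuxLemmas6
/-- for a Leibniz algebra `(V, [,])`, the Loday differential
`d(v₁⋯vₙ) = Σ_{i<j} (−1)^{j−1} v₁⋯[vᵢ,vⱼ]⋯v̂ⱼ⋯vₙ` satisfies `d ∘ d = 0`. -/
theorem loday_differential_squares_to_zero
    (br : V →ₗ[R] V →ₗ[R] V)
    (hLeibniz : ∀ v w u : V, br v (br w u) = br (br v w) u - br (br v u) w) :
    ∀ n : ℕ, dLei (TensorProduct.lift br) n ∘ₗ dLei (TensorProduct.lift br) (n+1) = 0 := by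
  set bL := TensorProduct.lift br with hbL
  have hb : ∀ v w u : V, bL (v ⊗ₜ[R] bL (w ⊗ₜ[R] u))
      = bL (bL (v ⊗ₜ[R] w) ⊗ₜ[R] u) - bL (bL (v ⊗ₜ[R] u) ⊗ₜ[R] w) := by
    intro v w u
    simp only [hbL, TensorProduct.lift.tmul]
    exact hLeibniz v w u
  intro n
  induction n with
  | zero =>
      rw [show dLei bL 0 = 0 from rfl, LinearMap.zero_comp]
  | succ m ih =>
      apply TP_ext1
      intro v x
      have h1 := LinearMap.congr_fun (dKc bL hb (m+1) v) x
      simp only [LinearMap.comp_apply] at h1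
      have h2 := LinearMap.congr_fun ih x
      simp only [LinearMap.comp_apply, LinearMap.zero_apply] at h2
      simp only [LinearMap.comp_apply, LinearMap.zero_apply]
      rw [dLei_succ_tmul bL (m+1) v x]
      simp only [map_sub]
      rw [h1,
          show dLei bL (m+1) (mkT (m+1) v (dLei bL (m+1) x))
            = Kc bL (m+1) v (dLei bL (m+1) x) - mkT m v (dLei bL m (dLei bL (m+1) x))
            from dLei_succ_tmul bL m _ _,
          h2, map_zero]
      abel
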